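/- For any δ > 0 and λ > 0, the two-dimensional Lebesgue measure of the set {z ∈ ℝ² : z₁² + z₂² ≤ δ + 2λ and |z₁ z₂| < δ/2} is at most 2δ(1 + log(2 + 4λ/δ)). -/

import Mathlib

open MeasureTheory in
theorem volume_disk_inter_hyperbola_bound
    (δ lam : ℝ) (hδ : 0 < δ) (hlam : 0 < lam) :
    volume {z : ℝ × ℝ | z.1 ^ 2 + z.2 ^ 2 ≤ δ + 2 * lam ∧ |z.1 * z.2| < δ / 2} ≤
      ENNReal.ofReal (2 * δ * (1 + Real.log (2 + 4 * lam / δ))) := by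
  have hδ2 : (0:ℝ) < δ + 2 * lam := by linarith
  set R := Real.sqrt (δ + 2 * lam) with hRdef
  have hR0 : 0 < R := Real.sqrt_pos.mpr hδ2
  have hR2 : R ^ 2 = δ + 2 * lam := Real.sq_sqrt hδ2.le
  set a := δ / (2 * R) with hadef
  have ha0 : 0 < a := by positivity
  have haR : a < R := by
    rw [hadef, div_lt_iff₀ (by positivity)]
    nlinarith
  set S := {z : ℝ × ℝ | z.1 ^ 2 + z.2 ^ 2 ≤ δ + 2 * lam ∧ |z.1 * z.2| < δ / 2} with hSdef
  have hS : MeasurableSet S := by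
    apply MeasurableSet.inter
    · exact measurableSet_le ((measurable_fst.pow_const 2).add (measurable_snd.pow_const 2)) measurable_const
    · exact measurableSet_lt (measurable_fst.mul measurable_snd).abs measurable_const
  set i1 : ℝ → ENNReal := (Set.Icc (-a) a).indicator (fun _ => ENNReal.ofReal (2 * R)) with hi1
  set i2 : ℝ → ENNReal := (Set.Ioc a R).indicator (fun x => ENNReal.ofReal (δ / x)) with hi2
  set i3 : ℝ → ENNReal := (Set.Ico (-R) (-a)).indicator (fun x => ENNReal.ofReal (δ / (-x))) with hi3
  have slice_bound : ∀ x : ℝ, volume (Prod.mk x ⁻¹' S) ≤ i1 x + i2 x + i3 x := by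
    intro x
    by_cases hx1 : |x| ≤ a
    · have hsub : Prod.mk x ⁻¹' S ⊆ Set.Icc (-R) R := by
        intro y hy
        simp only [hSdef, Set.mem_preimage, Set.mem_setOf_eq] at hy
        constructor <;> nlinarith [hy.1]
      calc volume (Prod.mk x ⁻¹' S) ≤ volume (Set.Icc (-R) R) := measure_mono hsub
        _ = ENNReal.ofReal (2 * R) := by rw [Real.volume_Icc]; ring_nf
        _ = i1 x := by rw [hi1, Set.indicator_of_mem (abs_le.mp hx1 |> fun h => Set.mem_Icc.mpr h)]
        _ ≤ i1 x + i2 x + i3 x := le_add_right (le_add_right le_rfl)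
    · push_neg at hx1
      have hx0 : x ≠ 0 := by
        intro h; rw [h, abs_zero] at hx1; exact absurd hx1 (not_lt.mpr ha0.le)
      by_cases hx2 : |x| ≤ R
      · have hsub : Prod.mk x ⁻¹' S ⊆ Set.Ioo (-(δ / (2 * |x|))) (δ / (2 * |x|)) := by
          intro y hy
          simp only [hSdef, Set.mem_preimage, Set.mem_setOf_eq] at hy
          have h := hy.2
          rw [abs_mul] at h
          have habs : |y| < δ / (2 * |x|) := by
            rw [lt_div_iff₀ (by positivity)]
            linarith [mul_comm (|x|) (|y|)]
          exact Set.mem_Ioo.mpr (abs_lt.mp habs)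
        have hv : volume (Set.Ioo (-(δ / (2 * |x|))) (δ / (2 * |x|))) =
            ENNReal.ofReal (δ / |x|) := by
          rw [Real.volume_Ioo]
          congr 1
          have : |x| ≠ 0 := abs_ne_zero.mpr hx0
          field_simp
          ring
        rcases lt_or_gt_of_ne hx0 with hneg | hpos
        · have hmem : x ∈ Set.Ico (-R) (-a) := by
            rw [abs_of_neg hneg] at hx1 hx2
            constructor <;> linarith
          calc volume (Prod.mk x ⁻¹' S) ≤ ENNReal.ofReal (δ / |x|) := hv ▸ measure_mono hsub
            _ = i3 x := by rw [hi3, Set.indicator_of_mem hmem, abs_of_neg hneg]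
            _ ≤ i1 x + i2 x + i3 x := le_add_left le_rfl
        · have hmem : x ∈ Set.Ioc a R := by
            rw [abs_of_pos hpos] at hx1 hx2
            exact ⟨hx1, hx2⟩
          calc volume (Prod.mk x ⁻¹' S) ≤ ENNReal.ofReal (δ / |x|) := hv ▸ measure_mono hsub
            _ = i2 x := by rw [hi2, Set.indicator_of_mem hmem, abs_of_pos hpos]
            _ ≤ i1 x + i2 x + i3 x := le_add_right (le_add_left le_rfl)
      · push_neg at hx2
        have : Prod.mk x ⁻¹' S = ∅ := by
          ext y
          simp only [hSdef, Set.mem_preimage, Set.mem_setOf_eq, Set.mem_empty_iff_false,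
            iff_false, not_and]
          intro h
          exfalso
          nlinarith [sq_abs x, sq_nonneg y]
        rw [this, measure_empty]
        exact zero_le
  have hL0 : 0 ≤ Real.log (R / a) :=
    Real.log_nonneg ((le_div_iff₀ ha0).mpr (by linarith [haR]))
  have hIi2 : ∫⁻ x, i2 x = ENNReal.ofReal (δ * Real.log (R / a)) := by
    rw [hi2, lintegral_indicator measurableSet_Ioc _]
    rw [← ofReal_integral_eq_lintegral_ofReal]
    · congr 1
      rw [← intervalIntegral.integral_of_le haR.le]
      have h0 : (0:ℝ) ∉ Set.uIcc a R := by
        rw [Set.uIcc_of_le haR.le]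
        intro h; exact absurd (Set.mem_Icc.mp h).1 (not_le.mpr ha0)
      simp_rw [div_eq_mul_inv]
      rw [intervalIntegral.integral_const_mul, integral_inv h0, div_eq_mul_inv]
    · apply IntegrableOn.mono_set _ Set.Ioc_subset_Icc_self
      apply ContinuousOn.integrableOn_compact isCompact_Icc
      apply ContinuousOn.div continuousOn_const continuousOn_id
      intro x hx; exact ne_of_gt (lt_of_lt_of_le ha0 hx.1)
    · rw [Filter.EventuallyLE, ae_restrict_iff' measurableSet_Ioc]
      exact ae_of_all _ fun x hx => div_nonneg hδ.le (le_of_lt (lt_trans ha0 hx.1))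
  have hIi3 : ∫⁻ x, i3 x = ENNReal.ofReal (δ * Real.log (R / a)) := by
    rw [hi3, lintegral_indicator measurableSet_Ico _]
    rw [← ofReal_integral_eq_lintegral_ofReal]
    · congr 1
      rw [MeasureTheory.integral_Ico_eq_integral_Ioo, ← MeasureTheory.integral_Ioc_eq_integral_Ioo,
        ← intervalIntegral.integral_of_le (by linarith : -R ≤ -a)]
      have h0 : (0:ℝ) ∉ Set.uIcc (-R) (-a) := by
        rw [Set.uIcc_of_le (by linarith : -R ≤ -a)]
        intro h; have := (Set.mem_Icc.mp h).2; linarith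
      have : ∀ x : ℝ, δ / (-x) = δ * -(x⁻¹) := by
        intro x; rw [div_neg, div_eq_mul_inv]; ring
      simp_rw [this]
      rw [intervalIntegral.integral_const_mul, intervalIntegral.integral_neg, integral_inv h0]
      rw [neg_div_neg_eq, ← Real.log_inv, inv_div]
    · apply IntegrableOn.mono_set _ Set.Ico_subset_Icc_self
      apply ContinuousOn.integrableOn_compact isCompact_Icc
      apply ContinuousOn.div continuousOn_const (continuousOn_id.neg)
      intro x hx
      have := (Set.mem_Icc.mp hx).2
      have : x < 0 := lt_of_le_of_lt this (by linarith)
      exact neg_ne_zero.mpr (ne_of_lt this)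
    · rw [Filter.EventuallyLE, ae_restrict_iff' measurableSet_Ico]
      refine ae_of_all _ fun x hx => div_nonneg hδ.le ?_
      have := (Set.mem_Ico.mp hx).2
      linarith
  have hIi1 : ∫⁻ x, i1 x = ENNReal.ofReal (2 * R) * ENNReal.ofReal (2 * a) := by
    rw [hi1, lintegral_indicator measurableSet_Icc _, setLIntegral_const, Real.volume_Icc]
    congr 1
    ring
  calc volume S = ∫⁻ x, volume (Prod.mk x ⁻¹' S) := by
        rw [Measure.volume_eq_prod, Measure.prod_apply hS]
    _ ≤ ∫⁻ x, (i1 x + i2 x + i3 x) := lintegral_mono slice_bound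
    _ = (∫⁻ x, i1 x) + (∫⁻ x, i2 x) + (∫⁻ x, i3 x) := by
        rw [lintegral_add_right _ (Measurable.indicator (by fun_prop) measurableSet_Ico),
          lintegral_add_left (measurable_const.indicator measurableSet_Icc)]
    _ = ENNReal.ofReal (2 * δ * (1 + Real.log (2 + 4 * lam / δ))) := by
        rw [hIi1, hIi2, hIi3, ← ENNReal.ofReal_mul (by positivity),
          ← ENNReal.ofReal_add (by positivity) (by positivity),
          ← ENNReal.ofReal_add (by positivity) (by positivity)]
        congr 1
        have h1 : 2 * R * (2 * a) = 2 * δ := by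
          rw [hadef]; field_simp
        have h2 : R / a = 2 + 4 * lam / δ := by
          rw [hadef]; field_simp; nlinarith
        rw [h1, h2]
        ring
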